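/- Let the weighted undirected graph a on n nodes be given and let (X*, Y*, Z*, U*, W*, Λ¹*, Λ²*) be an equilibrium of algorithm (CRR-alg). Define, for Y_{vi} ∈ ℝ^{r_i×q} and U_i ∈ ℝ^{m×q} (i = 1,…,n), V₁(Y, U) = (1/2)Σ_{i=1}^n ‖A_{li}Y_{vi} − [F_{vi}]_R − U_i‖_F² + Σ_{i=1}^n ⟨Λ¹_i*, U_i⟩_F + Σ_{i=1}^n ⟨Λ²_i*, [Y_{vi}]_R⟩_F − (1/2)Σ_{i=1}^n ‖A_{li}Y_{vi}* − [F_{vi}]_R − U_i*‖_F². Then V₁(Y, U) ≥ 0 for all Y, U. -/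
import Mathlib


open Matrix

/-- Squared Frobenius norm of a real matrix: `‖M‖_F² = tr (Mᵀ M)`. -/
noncomputable def frobSq {α β : Type*} [Fintype α] [Fintype β] (M : Matrix α β ℝ) : ℝ :=
  Matrix.trace (Mᵀ * M)

/-- Frobenius inner product of real matrices: `⟨M,N⟩_F = tr (Mᵀ N)`. -/
noncomputable def frobInner {α β : Type*} [Fintype α] [Fintype β] (M N : Matrix α β ℝ) : ℝ :=
  Matrix.trace (Mᵀ * N)

/-- The weighted undirected graph with adjacency matrix `a` is connected: any two nodes are
joined by a path of adjacent nodes (nodes `u ≠ v` are adjacent iff `a u v > 0`). -/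
def GraphConnected {n : ℕ} (a : Matrix (Fin n) (Fin n) ℝ) : Prop :=
  ∀ i j : Fin n, Relation.ReflTransGen (fun u v : Fin n => u ≠ v ∧ 0 < a u v) i j

/-- Assemble a family of row blocks `M i ∈ ℝ^{d i × β}` into one matrix. -/
def blockRows {n : ℕ} {d : Fin n → ℕ} {β : Type*} (M : ∀ i, Matrix (Fin (d i)) β ℝ) :
    Matrix ((i : Fin n) × Fin (d i)) β ℝ :=
  Matrix.of fun s j => M s.1 s.2 j

/-- Assemble a family of column blocks `M i ∈ ℝ^{α × d i}` into one matrix. -/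
def blockCols {n : ℕ} {d : Fin n → ℕ} {α : Type*} (M : ∀ i, Matrix α (Fin (d i)) ℝ) :
    Matrix α ((i : Fin n) × Fin (d i)) ℝ :=
  Matrix.of fun k s => M s.1 k s.2

/-- The `i`-th row block of a matrix whose rows are partitioned according to `d`. -/
def rowBlk {n : ℕ} {d : Fin n → ℕ} {β : Type*}
    (Y : Matrix ((i : Fin n) × Fin (d i)) β ℝ) (i : Fin n) :
    Matrix (Fin (d i)) β ℝ :=
  Matrix.of fun k j => Y ⟨i, k⟩ j

/-- `[M]_R`: the matrix whose `i`-th row block is `M` and whose other row blocks are zero. -/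
def embedRow {n : ℕ} {d : Fin n → ℕ} {β : Type*} (i : Fin n)
    (M : Matrix (Fin (d i)) β ℝ) :
    Matrix ((i' : Fin n) × Fin (d i')) β ℝ :=
  Matrix.of fun s j => if h : s.1 = i then M (Fin.cast (congrArg d h) s.2) j else 0

/-- `[M]_C`: the matrix whose `i`-th column block is `M` and whose other column blocks are zero. -/
def embedCol {n : ℕ} {d : Fin n → ℕ} {α : Type*} (i : Fin n)
    (M : Matrix α (Fin (d i)) ℝ) :
    Matrix α ((i' : Fin n) × Fin (d i')) ℝ :=
  Matrix.of fun k s => if h : s.1 = i then M k (Fin.cast (congrArg d h) s.2) else 0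

/-- Feasibility for problem (CRR-opt). -/
def CRRfeas {n q : ℕ} {rdim mdim pdim : Fin n → ℕ}
    (a : Matrix (Fin n) (Fin n) ℝ)
    (Bv : ∀ i, Matrix (Fin (pdim i)) (Fin q) ℝ)
    (Xl : ∀ i, Matrix ((i' : Fin n) × Fin (rdim i')) (Fin (pdim i)) ℝ)
    (Yv : ∀ i, Matrix (Fin (rdim i)) (Fin q) ℝ)
    (Z : Fin n → Matrix ((i : Fin n) × Fin (rdim i)) (Fin q) ℝ)
    (U W : Fin n → Matrix ((i : Fin n) × Fin (mdim i)) (Fin q) ℝ) : Prop :=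
  (∀ i, embedRow i (Yv i) - Xl i * Bv i - ∑ j, a i j • (Z i - Z j) = 0) ∧
  (∀ i, U i = ∑ j, a i j • (W i - W j))

/-- Objective of problem (CRR-opt): `Σ_i ‖A_{li} Y_{vi} − [F_{vi}]_R − U_i‖_F²`. -/
noncomputable def CRRobj {n q : ℕ} {rdim mdim : Fin n → ℕ}
    (Al : ∀ i, Matrix ((i' : Fin n) × Fin (mdim i')) (Fin (rdim i)) ℝ)
    (Fv : ∀ i, Matrix (Fin (mdim i)) (Fin q) ℝ)
    (Yv : ∀ i, Matrix (Fin (rdim i)) (Fin q) ℝ)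
    (U : Fin n → Matrix ((i : Fin n) × Fin (mdim i)) (Fin q) ℝ) : ℝ :=
  ∑ i, frobSq (Al i * Yv i - embedRow i (Fv i) - U i)

/-- Right-hand side of the `X_{li}`-equation in algorithm (CRR-alg). -/
noncomputable def CRRrhsX {n q : ℕ} {rdim pdim : Fin n → ℕ}
    (Bv : ∀ i, Matrix (Fin (pdim i)) (Fin q) ℝ)
    (L2 : Fin n → Matrix ((i : Fin n) × Fin (rdim i)) (Fin q) ℝ) (i : Fin n) :
    Matrix ((i' : Fin n) × Fin (rdim i')) (Fin (pdim i)) ℝ :=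
  L2 i * (Bv i)ᵀ

/-- Right-hand side of the `Y_{vi}`-equation in algorithm (CRR-alg). -/
noncomputable def CRRrhsY {n q : ℕ} {rdim mdim : Fin n → ℕ}
    (Al : ∀ i, Matrix ((i' : Fin n) × Fin (mdim i')) (Fin (rdim i)) ℝ)
    (Fv : ∀ i, Matrix (Fin (mdim i)) (Fin q) ℝ)
    (Yv : ∀ i, Matrix (Fin (rdim i)) (Fin q) ℝ)
    (U : Fin n → Matrix ((i : Fin n) × Fin (mdim i)) (Fin q) ℝ)
    (L2 : Fin n → Matrix ((i : Fin n) × Fin (rdim i)) (Fin q) ℝ) (i : Fin n) :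
    Matrix (Fin (rdim i)) (Fin q) ℝ :=
  -((Al i)ᵀ * (Al i * Yv i - embedRow i (Fv i) - U i)) - rowBlk (L2 i) i

/-- Right-hand side of the `U_i`-equation in algorithm (CRR-alg). -/
noncomputable def CRRrhsU {n q : ℕ} {rdim mdim : Fin n → ℕ}
    (Al : ∀ i, Matrix ((i' : Fin n) × Fin (mdim i')) (Fin (rdim i)) ℝ)
    (Fv : ∀ i, Matrix (Fin (mdim i)) (Fin q) ℝ)
    (Yv : ∀ i, Matrix (Fin (rdim i)) (Fin q) ℝ)
    (U L1 : Fin n → Matrix ((i : Fin n) × Fin (mdim i)) (Fin q) ℝ) (i : Fin n) :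
    Matrix ((i : Fin n) × Fin (mdim i)) (Fin q) ℝ :=
  Al i * Yv i - embedRow i (Fv i) - U i - L1 i

/-- Right-hand side of the `W_i`-equation in algorithm (CRR-alg). -/
noncomputable def CRRrhsW {n q : ℕ} {mdim : Fin n → ℕ}
    (a : Matrix (Fin n) (Fin n) ℝ)
    (L1 : Fin n → Matrix ((i : Fin n) × Fin (mdim i)) (Fin q) ℝ) (i : Fin n) :
    Matrix ((i : Fin n) × Fin (mdim i)) (Fin q) ℝ :=
  ∑ j, a i j • (L1 i - L1 j)

/-- Right-hand side of the `Z_i`-equation in algorithm (CRR-alg). -/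
noncomputable def CRRrhsZ {n q : ℕ} {rdim : Fin n → ℕ}
    (a : Matrix (Fin n) (Fin n) ℝ)
    (L2 : Fin n → Matrix ((i : Fin n) × Fin (rdim i)) (Fin q) ℝ) (i : Fin n) :
    Matrix ((i : Fin n) × Fin (rdim i)) (Fin q) ℝ :=
  ∑ j, a i j • (L2 i - L2 j)

/-- Right-hand side of the `Λ¹_i`-equation in algorithm (CRR-alg), with the derivative
feedback replaced by the right-hand side that determines it. -/
noncomputable def CRRrhsL1 {n q : ℕ} {rdim mdim : Fin n → ℕ}
    (a : Matrix (Fin n) (Fin n) ℝ)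
    (Al : ∀ i, Matrix ((i' : Fin n) × Fin (mdim i')) (Fin (rdim i)) ℝ)
    (Fv : ∀ i, Matrix (Fin (mdim i)) (Fin q) ℝ)
    (Yv : ∀ i, Matrix (Fin (rdim i)) (Fin q) ℝ)
    (U W L1 : Fin n → Matrix ((i : Fin n) × Fin (mdim i)) (Fin q) ℝ) (i : Fin n) :
    Matrix ((i : Fin n) × Fin (mdim i)) (Fin q) ℝ :=
  U i + CRRrhsU Al Fv Yv U L1 i - ∑ j, a i j • (W i - W j) - ∑ j, a i j • (L1 i - L1 j)

/-- Right-hand side of the `Λ²_i`-equation in algorithm (CRR-alg), with the derivative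
feedbacks replaced by the right-hand sides that determine them. -/
noncomputable def CRRrhsL2 {n q : ℕ} {rdim mdim pdim : Fin n → ℕ}
    (a : Matrix (Fin n) (Fin n) ℝ)
    (Al : ∀ i, Matrix ((i' : Fin n) × Fin (mdim i')) (Fin (rdim i)) ℝ)
    (Bv : ∀ i, Matrix (Fin (pdim i)) (Fin q) ℝ)
    (Fv : ∀ i, Matrix (Fin (mdim i)) (Fin q) ℝ)
    (Xl : ∀ i, Matrix ((i' : Fin n) × Fin (rdim i')) (Fin (pdim i)) ℝ)
    (Yv : ∀ i, Matrix (Fin (rdim i)) (Fin q) ℝ)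
    (Z : Fin n → Matrix ((i : Fin n) × Fin (rdim i)) (Fin q) ℝ)
    (U : Fin n → Matrix ((i : Fin n) × Fin (mdim i)) (Fin q) ℝ)
    (L2 : Fin n → Matrix ((i : Fin n) × Fin (rdim i)) (Fin q) ℝ) (i : Fin n) :
    Matrix ((i : Fin n) × Fin (rdim i)) (Fin q) ℝ :=
  embedRow i (Yv i) + embedRow i (CRRrhsY Al Fv Yv U L2 i) - Xl i * Bv i
    - ∑ j, a i j • (Z i - Z j) - ∑ j, a i j • (L2 i - L2 j)
    - CRRrhsX Bv L2 i * Bv i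

/-- Equilibrium of algorithm (CRR-alg): all right-hand sides vanish. -/
noncomputable def CRRequil {n q : ℕ} {rdim mdim pdim : Fin n → ℕ}
    (a : Matrix (Fin n) (Fin n) ℝ)
    (Al : ∀ i, Matrix ((i' : Fin n) × Fin (mdim i')) (Fin (rdim i)) ℝ)
    (Bv : ∀ i, Matrix (Fin (pdim i)) (Fin q) ℝ)
    (Fv : ∀ i, Matrix (Fin (mdim i)) (Fin q) ℝ)
    (Xl : ∀ i, Matrix ((i' : Fin n) × Fin (rdim i')) (Fin (pdim i)) ℝ)
    (Yv : ∀ i, Matrix (Fin (rdim i)) (Fin q) ℝ)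
    (Z : Fin n → Matrix ((i : Fin n) × Fin (rdim i)) (Fin q) ℝ)
    (U W L1 : Fin n → Matrix ((i : Fin n) × Fin (mdim i)) (Fin q) ℝ)
    (L2 : Fin n → Matrix ((i : Fin n) × Fin (rdim i)) (Fin q) ℝ) : Prop :=
  ∀ i, CRRrhsX Bv L2 i = 0 ∧ CRRrhsY Al Fv Yv U L2 i = 0 ∧
    CRRrhsU Al Fv Yv U L1 i = 0 ∧ CRRrhsW a L1 i = 0 ∧ CRRrhsZ a L2 i = 0 ∧
    CRRrhsL1 a Al Fv Yv U W L1 i = 0 ∧ CRRrhsL2 a Al Bv Fv Xl Yv Z U L2 i = 0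

section aux
variable {α β γ : Type*} [Fintype α] [Fintype β] [Fintype γ]

lemma frobInner_comm (M N : Matrix α β ℝ) : frobInner M N = frobInner N M := by
  unfold frobInner
  rw [← Matrix.trace_transpose (Mᵀ * N), transpose_mul, transpose_transpose]

lemma frobInner_sub_right (M N P : Matrix α β ℝ) :
    frobInner M (N - P) = frobInner M N - frobInner M P := by
  simp [frobInner, Matrix.mul_sub]

lemma frobInner_add_right (M N P : Matrix α β ℝ) :
    frobInner M (N + P) = frobInner M N + frobInner M P := by
  simp [frobInner, Matrix.mul_add]

lemma frobInner_smul_right (c : ℝ) (M N : Matrix α β ℝ) :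
    frobInner M (c • N) = c * frobInner M N := by
  simp [frobInner, Matrix.mul_smul]

lemma frobInner_neg_right (M N : Matrix α β ℝ) :
    frobInner M (-N) = -frobInner M N := by
  simp [frobInner, Matrix.mul_neg]

lemma frobInner_zero_right (M : Matrix α β ℝ) : frobInner M 0 = 0 := by
  simp [frobInner]

lemma frobInner_zero_left (M : Matrix α β ℝ) : frobInner 0 M = 0 := by
  simp [frobInner]

lemma frobInner_sum_right {ι : Type*} (s : Finset ι) (M : Matrix α β ℝ)
    (f : ι → Matrix α β ℝ) :
    frobInner M (∑ j ∈ s, f j) = ∑ j ∈ s, frobInner M (f j) := by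
  simp [frobInner, Matrix.mul_sum]

lemma frobInner_mul_left (A : Matrix α γ ℝ) (M : Matrix γ β ℝ) (N : Matrix α β ℝ) :
    frobInner (A * M) N = frobInner M (Aᵀ * N) := by
  simp [frobInner, transpose_mul, Matrix.mul_assoc]

lemma frobInner_mul_right (L : Matrix α β ℝ) (X : Matrix α γ ℝ) (B : Matrix γ β ℝ) :
    frobInner L (X * B) = frobInner (L * Bᵀ) X := by
  unfold frobInner
  rw [transpose_mul, transpose_transpose, Matrix.trace_mul_comm Lᵀ (X * B),
    Matrix.mul_assoc, Matrix.trace_mul_comm X (B * Lᵀ)]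

lemma frobSq_eq (M : Matrix α β ℝ) : frobSq M = frobInner M M := rfl

lemma frobInner_eq_sum (M N : Matrix α β ℝ) :
    frobInner M N = ∑ j, ∑ i, M i j * N i j := by
  simp [frobInner, Matrix.trace, Matrix.mul_apply, Matrix.diag]

lemma frobSq_nonneg (M : Matrix α β ℝ) : 0 ≤ frobSq M := by
  rw [frobSq_eq, frobInner_eq_sum]
  refine Finset.sum_nonneg fun j _ => Finset.sum_nonneg fun i _ => mul_self_nonneg _

lemma frobSq_sub (M N : Matrix α β ℝ) :
    frobSq (M - N) = frobSq M - 2 * frobInner N M + frobSq N := by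
  rw [frobSq_eq, frobSq_eq, frobSq_eq, frobInner_sub_right,
    frobInner_comm (M - N) M, frobInner_comm (M - N) N,
    frobInner_sub_right, frobInner_sub_right, frobInner_comm M N]
  ring

end aux

lemma frobInner_embedRow {n : ℕ} {d : Fin n → ℕ} {β : Type*} [Fintype β]
    (i : Fin n) (M : Matrix (Fin (d i)) β ℝ)
    (Y : Matrix ((i' : Fin n) × Fin (d i')) β ℝ) :
    frobInner (embedRow i M) Y = frobInner M (rowBlk Y i) := by
  rw [frobInner_eq_sum, frobInner_eq_sum]
  refine Finset.sum_congr rfl fun j _ => ?_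
  rw [← Finset.univ_sigma_univ, Finset.sum_sigma]
  refine Finset.sum_eq_single i (fun i' _ hne => ?_) (by simp) |>.trans ?_
  · apply Finset.sum_eq_zero; intro k _
    simp [embedRow, hne]
  · refine Finset.sum_congr rfl fun k _ => ?_
    simp [embedRow, rowBlk]

lemma embedRow_zero {n : ℕ} {d : Fin n → ℕ} {β : Type*} (i : Fin n) :
    embedRow (d := d) (β := β) i 0 = 0 := by
  ext s j; simp [embedRow]

lemma graph_sum_zero {n : ℕ} {α β : Type*} [Fintype α] [Fintype β]
    (a : Matrix (Fin n) (Fin n) ℝ) (hsym : ∀ i j, a i j = a j i)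
    (P Q : Fin n → Matrix α β ℝ)
    (hP : ∀ i, ∑ j, a i j • (P i - P j) = 0) :
    ∑ i, frobInner (P i) (∑ j, a i j • (Q i - Q j)) = 0 := by
  have expand : ∀ (R S : Fin n → Matrix α β ℝ), ∀ i,
      frobInner (R i) (∑ j, a i j • (S i - S j))
        = ∑ j, (a i j * frobInner (R i) (S i) - a i j * frobInner (R i) (S j)) := by
    intro R S i
    rw [frobInner_sum_right]
    exact Finset.sum_congr rfl fun j _ => by
      rw [frobInner_smul_right, frobInner_sub_right, mul_sub]
  calc ∑ i, frobInner (P i) (∑ j, a i j • (Q i - Q j))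
      = ∑ i, ∑ j, (a i j * frobInner (P i) (Q i) - a i j * frobInner (P i) (Q j)) :=
        Finset.sum_congr rfl fun i _ => expand P Q i
    _ = ∑ i, ∑ j, a i j * frobInner (P i) (Q i)
          - ∑ i, ∑ j, a i j * frobInner (P i) (Q j) := by
        simp [Finset.sum_sub_distrib]
    _ = ∑ i, ∑ j, a i j * frobInner (P i) (Q i)
          - ∑ i, ∑ j, a i j * frobInner (P j) (Q i) := by
        congr 1
        rw [Finset.sum_comm]
        exact Finset.sum_congr rfl fun i _ => Finset.sum_congr rfl fun j _ => by
          rw [hsym i j]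
    _ = ∑ i, ∑ j, (a i j * frobInner (Q i) (P i) - a i j * frobInner (Q i) (P j)) := by
        simp only [Finset.sum_sub_distrib]
        congr 1 <;>
          exact Finset.sum_congr rfl fun i _ => Finset.sum_congr rfl fun j _ => by
            rw [frobInner_comm]
    _ = ∑ i, frobInner (Q i) (∑ j, a i j • (P i - P j)) :=
        (Finset.sum_congr rfl fun i _ => (expand Q P i).symm)
    _ = 0 := by
        refine Finset.sum_eq_zero fun i _ => ?_
        rw [hP i, frobInner_zero_right]

theorem stmt_17 (n q : ℕ) (rdim mdim pdim : Fin n → ℕ)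
    (a : Matrix (Fin n) (Fin n) ℝ)
    (hsym : ∀ i j, a i j = a j i) (hnonneg : ∀ i j, 0 ≤ a i j)
    (hdiag : ∀ i, a i i = 0)
    (Al : ∀ i, Matrix ((i' : Fin n) × Fin (mdim i')) (Fin (rdim i)) ℝ)
    (Bv : ∀ i, Matrix (Fin (pdim i)) (Fin q) ℝ)
    (Fv : ∀ i, Matrix (Fin (mdim i)) (Fin q) ℝ)
    (Xls : ∀ i, Matrix ((i' : Fin n) × Fin (rdim i')) (Fin (pdim i)) ℝ)
    (Ys : ∀ i, Matrix (Fin (rdim i)) (Fin q) ℝ)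
    (Zs : Fin n → Matrix ((i : Fin n) × Fin (rdim i)) (Fin q) ℝ)
    (Us Ws L1s : Fin n → Matrix ((i : Fin n) × Fin (mdim i)) (Fin q) ℝ)
    (L2s : Fin n → Matrix ((i : Fin n) × Fin (rdim i)) (Fin q) ℝ)
    (hequil : CRRequil a Al Bv Fv Xls Ys Zs Us Ws L1s L2s)
    (Yv : ∀ i, Matrix (Fin (rdim i)) (Fin q) ℝ)
    (U : Fin n → Matrix ((i : Fin n) × Fin (mdim i)) (Fin q) ℝ) :
    0 ≤ (1 / 2) * (∑ i, frobSq (Al i * Yv i - embedRow i (Fv i) - U i))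
        + (∑ i, frobInner (L1s i) (U i))
        + (∑ i, frobInner (L2s i) (embedRow i (Yv i)))
        - (1 / 2) * (∑ i, frobSq (Al i * Ys i - embedRow i (Fv i) - Us i)) := by
  -- equilibrium facts
  have hX : ∀ i, L2s i * (Bv i)ᵀ = 0 := fun i => (hequil i).1
  have hYe : ∀ i, CRRrhsY Al Fv Ys Us L2s i = 0 := fun i => (hequil i).2.1
  have hUe : ∀ i, CRRrhsU Al Fv Ys Us L1s i = 0 := fun i => (hequil i).2.2.1
  have hWe : ∀ i, ∑ j, a i j • (L1s i - L1s j) = 0 := fun i => (hequil i).2.2.2.1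
  have hZe : ∀ i, ∑ j, a i j • (L2s i - L2s j) = 0 := fun i => (hequil i).2.2.2.2.1
  have hL1s : ∀ i, L1s i = Al i * Ys i - embedRow i (Fv i) - Us i := by
    intro i
    have h := hUe i
    unfold CRRrhsU at h
    rw [sub_eq_zero] at h
    exact h.symm
  have hrowBlk : ∀ i, rowBlk (L2s i) i
      = -((Al i)ᵀ * (Al i * Ys i - embedRow i (Fv i) - Us i)) := by
    intro i
    have h := hYe i
    unfold CRRrhsY at h
    rw [sub_eq_zero] at h
    exact h.symm
  have hUs : ∀ i, Us i = ∑ j, a i j • (Ws i - Ws j) := by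
    intro i
    have h := (hequil i).2.2.2.2.2.1
    unfold CRRrhsL1 at h
    rw [hUe i, hWe i] at h
    have h' : Us i - ∑ j, a i j • (Ws i - Ws j) = 0 := by
      rw [← h]; abel
    rw [sub_eq_zero] at h'
    exact h'
  have hYsR : ∀ i, embedRow i (Ys i)
      = Xls i * Bv i + ∑ j, a i j • (Zs i - Zs j) := by
    intro i
    have h := (hequil i).2.2.2.2.2.2
    unfold CRRrhsL2 at h
    rw [hYe i, hZe i, (hequil i).1, embedRow_zero, Matrix.zero_mul] at h
    have h' : embedRow i (Ys i) - (Xls i * Bv i + ∑ j, a i j • (Zs i - Zs j)) = 0 := by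
      rw [← h]; abel
    rw [sub_eq_zero] at h'
    exact h'
  -- key vanishing sums
  have h1 : ∑ i, frobInner (L1s i) (Us i) = 0 := by
    calc ∑ i, frobInner (L1s i) (Us i)
        = ∑ i, frobInner (L1s i) (∑ j, a i j • (Ws i - Ws j)) :=
          Finset.sum_congr rfl fun i _ => by rw [hUs i]
      _ = 0 := graph_sum_zero a hsym L1s Ws hWe
  have h2 : ∑ i, frobInner (L2s i) (embedRow i (Ys i)) = 0 := by
    calc ∑ i, frobInner (L2s i) (embedRow i (Ys i))
        = ∑ i, (frobInner (L2s i) (Xls i * Bv i)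
            + frobInner (L2s i) (∑ j, a i j • (Zs i - Zs j))) :=
          Finset.sum_congr rfl fun i _ => by rw [hYsR i, frobInner_add_right]
      _ = ∑ i, frobInner (L2s i) (∑ j, a i j • (Zs i - Zs j)) := by
          refine Finset.sum_congr rfl fun i _ => ?_
          rw [frobInner_mul_right, hX i, frobInner_zero_left, zero_add]
      _ = 0 := graph_sum_zero a hsym L2s Zs hZe
  -- adjoint identity
  have hAdj : ∀ i (Yi : Matrix (Fin (rdim i)) (Fin q) ℝ),
      frobInner (L2s i) (embedRow i Yi)
        = - frobInner (Al i * Ys i - embedRow i (Fv i) - Us i) (Al i * Yi) := by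
    intro i Yi
    rw [frobInner_comm, frobInner_embedRow, hrowBlk i, frobInner_neg_right,
      ← frobInner_mul_left, frobInner_comm]
  have hEsU : ∑ i, frobInner (Al i * Ys i - embedRow i (Fv i) - Us i) (Us i) = 0 := by
    rw [← h1]
    exact Finset.sum_congr rfl fun i _ => by rw [hL1s i]
  have hEsA : ∑ i, frobInner (Al i * Ys i - embedRow i (Fv i) - Us i) (Al i * Ys i) = 0 := by
    have : ∑ i, frobInner (L2s i) (embedRow i (Ys i))
        = - ∑ i, frobInner (Al i * Ys i - embedRow i (Fv i) - Us i) (Al i * Ys i) := by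
      rw [← Finset.sum_neg_distrib]
      exact Finset.sum_congr rfl fun i _ => hAdj i (Ys i)
    rw [h2] at this
    linarith
  have h3 : ∑ i, frobInner (Al i * Ys i - embedRow i (Fv i) - Us i) (embedRow i (Fv i))
      = - ∑ i, frobSq (Al i * Ys i - embedRow i (Fv i) - Us i) := by
    have expand : ∀ i, frobInner (Al i * Ys i - embedRow i (Fv i) - Us i) (embedRow i (Fv i))
        = frobInner (Al i * Ys i - embedRow i (Fv i) - Us i) (Al i * Ys i)
          - frobInner (Al i * Ys i - embedRow i (Fv i) - Us i) (Us i)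
          - frobSq (Al i * Ys i - embedRow i (Fv i) - Us i) := by
      intro i
      have e1 : frobInner (Al i * Ys i - embedRow i (Fv i) - Us i) (Al i * Ys i)
          - frobInner (Al i * Ys i - embedRow i (Fv i) - Us i) (embedRow i (Fv i))
          - frobInner (Al i * Ys i - embedRow i (Fv i) - Us i) (Us i)
          = frobSq (Al i * Ys i - embedRow i (Fv i) - Us i) := by
        rw [← frobInner_sub_right, ← frobInner_sub_right, frobSq_eq]
      linarith
    rw [Finset.sum_congr rfl fun i _ => expand i, Finset.sum_sub_distrib,
      Finset.sum_sub_distrib, hEsA, hEsU]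
    ring
  -- rewrite the goal
  have hgU : ∑ i, frobInner (L1s i) (U i)
      = ∑ i, frobInner (Al i * Ys i - embedRow i (Fv i) - Us i) (U i) :=
    Finset.sum_congr rfl fun i _ => by rw [hL1s i]
  have hgY : ∑ i, frobInner (L2s i) (embedRow i (Yv i))
      = - ∑ i, frobInner (Al i * Ys i - embedRow i (Fv i) - Us i) (Al i * Yv i) := by
    rw [← Finset.sum_neg_distrib]
    exact Finset.sum_congr rfl fun i _ => hAdj i (Yv i)
  have h7 : ∑ i, frobInner (Al i * Ys i - embedRow i (Fv i) - Us i)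
        (Al i * Yv i - embedRow i (Fv i) - U i)
      = ∑ i, frobInner (Al i * Ys i - embedRow i (Fv i) - Us i) (Al i * Yv i)
        - ∑ i, frobInner (Al i * Ys i - embedRow i (Fv i) - Us i) (embedRow i (Fv i))
        - ∑ i, frobInner (Al i * Ys i - embedRow i (Fv i) - Us i) (U i) := by
    rw [← Finset.sum_sub_distrib, ← Finset.sum_sub_distrib]
    exact Finset.sum_congr rfl fun i _ => by
      rw [frobInner_sub_right, frobInner_sub_right]
  have h6 : ∑ i, frobSq ((Al i * Yv i - embedRow i (Fv i) - U i)
        - (Al i * Ys i - embedRow i (Fv i) - Us i))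
      = ∑ i, frobSq (Al i * Yv i - embedRow i (Fv i) - U i)
        - 2 * ∑ i, frobInner (Al i * Ys i - embedRow i (Fv i) - Us i)
            (Al i * Yv i - embedRow i (Fv i) - U i)
        + ∑ i, frobSq (Al i * Ys i - embedRow i (Fv i) - Us i) := by
    rw [Finset.mul_sum, ← Finset.sum_sub_distrib, ← Finset.sum_add_distrib]
    exact Finset.sum_congr rfl fun i _ => frobSq_sub _ _
  have hpos : 0 ≤ ∑ i, frobSq ((Al i * Yv i - embedRow i (Fv i) - U i)
      - (Al i * Ys i - embedRow i (Fv i) - Us i)) :=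
    Finset.sum_nonneg fun i _ => frobSq_nonneg _
  rw [hgU, hgY]
  linarith
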